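/- For one-dimensional M-CLP with A=[1], β > 0, b > 0, γ < 0, c > 0, and time horizon T = −γ/c, the optimal solution is not unique: for every u⁰ with 0 ≤ u⁰ ≤ β, the control U(t) = u⁰ (a single impulse of size u⁰ at time 0) is an optimal solution of M-CLP, all achieving the same objective value. -/

import Mathlib

open MeasureTheory Set

noncomputable def sObj (T g c : ℝ) (U : StieltjesFunction ℝ) : ℝ :=
  ∫ t in Icc (0:ℝ) T, (g + (T - t) * c) ∂U.measure

def sFeasP (β b T : ℝ) (U : StieltjesFunction ℝ) : Prop :=
  (∀ t < (0:ℝ), U t = 0) ∧ (∀ t, 0 ≤ U t) ∧ ∀ t ∈ Icc (0:ℝ) T, U t ≤ β + b * t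

/-- The step function with a single jump of size `u0` at `0`. -/
noncomputable def stepSF (u0 : ℝ) (h : 0 ≤ u0) : StieltjesFunction ℝ where
  toFun := fun t => if t < 0 then 0 else u0
  mono' := by
    intro a b hab
    by_cases ha : a < 0
    · simp only [if_pos ha]
      by_cases hb : b < 0 <;> simp [hb, h]
    · have hb : ¬ b < 0 := fun hb => ha (lt_of_le_of_lt hab hb)
      simp [ha, hb]
  right_continuous' := by
    intro x
    by_cases hx : x < 0
    · have : ContinuousAt (fun t : ℝ => if t < 0 then 0 else u0) x := by
        have h0 : Iio (0:ℝ) ∈ nhds x := Iio_mem_nhds hx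
        exact (continuousAt_const (y := (0:ℝ))).congr
          (Filter.eventuallyEq_of_mem h0 (fun y hy => by simp [hy.out])).symm
      exact this.continuousWithinAt
    · push_neg at hx
      refine (continuousWithinAt_const (b := u0)).congr ?_ ?_
      · intro y hy
        have : ¬ y < 0 := not_lt.mpr (le_trans hx hy)
        simp [this]
      · simp [not_lt.mpr hx]

lemma stepSF_apply (u0 : ℝ) (h : 0 ≤ u0) (t : ℝ) :
    stepSF u0 h t = if t < 0 then 0 else u0 := rfl

/-- Case 3 at the critical horizon T = -γ/c (β>0, b>0, γ<0, c>0): the optimal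
solution is not unique.  For every 0 ≤ u⁰ ≤ β, the single impulse of size u⁰
at time 0 is an optimal solution, and all these solutions have the same
objective value. -/
theorem mclp_one_dim_case3_nonunique (β b γ c T : ℝ)
    (hβ : 0 < β) (hb : 0 < b) (hγ : γ < 0) (hc : 0 < c) (hT : T = -γ / c) :
    ∀ u0 : ℝ, 0 ≤ u0 → u0 ≤ β →
      ∃ U : StieltjesFunction ℝ,
        (∀ t < (0:ℝ), U t = 0) ∧ (∀ t ∈ Icc (0:ℝ) T, U t = u0) ∧
        sFeasP β b T U ∧
        (∀ U' : StieltjesFunction ℝ, sFeasP β b T U' → sObj T γ c U' ≤ sObj T γ c U) ∧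
        sObj T γ c U = 0 := by
  intro u0 hu0 hu0β
  have hTpos : 0 < T := by rw [hT]; exact div_pos (neg_pos.mpr hγ) hc
  have hTc : γ + T * c = 0 := by rw [hT]; field_simp; ring
  set U := stepSF u0 hu0 with hU
  set f : ℝ → ℝ := fun t => γ + (T - t) * c with hf
  -- f is nonpositive on [0, T], and zero only at t = 0 there
  have hfle : ∀ t, 0 ≤ t → f t ≤ 0 := by
    intro t ht
    have : (T - t) * c ≤ T * c := by
      apply mul_le_mul_of_nonneg_right (by linarith) hc.le
    simp only [hf]; linarith
  have hfne : ∀ t, f t ≠ 0 → t ≠ 0 := by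
    intro t h ht
    apply h
    simp only [hf, ht, sub_zero, hTc]
  -- the objective value of U is zero
  have hzero : sObj T γ c U = 0 := by
    apply integral_eq_zero_of_ae
    rw [Filter.EventuallyEq, ae_iff]
    simp only [Pi.zero_apply]
    have hres : (U.measure.restrict (Icc (0:ℝ) T)) {t | ¬ f t = 0} =
        U.measure ({t | ¬ f t = 0} ∩ Icc (0:ℝ) T) :=
      Measure.restrict_apply' measurableSet_Icc
    rw [hres]
    have hsub : {t | ¬ f t = 0} ∩ Icc (0:ℝ) T ⊆ Ioc (0:ℝ) T := by
      rintro t ⟨h1, h2, h3⟩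
      exact ⟨lt_of_le_of_ne h2 (Ne.symm (hfne t h1)), h3⟩
    refine le_antisymm (le_trans (measure_mono hsub) ?_) zero_le
    rw [StieltjesFunction.measure_Ioc]
    have h1 : U T = u0 := by
      simp [hU, stepSF_apply, not_lt.mpr hTpos.le]
    have h2 : U 0 = u0 := by simp [hU, stepSF_apply]
    simp [h1, h2]
  refine ⟨U, ?_, ?_, ?_, ?_, hzero⟩
  · intro t ht; simp [hU, stepSF_apply, ht]
  · intro t ht; simp [hU, stepSF_apply, not_lt.mpr ht.1]
  · refine ⟨fun t ht => by simp [hU, stepSF_apply, ht], fun t => ?_, fun t ht => ?_⟩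
    · by_cases h : t < 0 <;> simp [hU, stepSF_apply, h, hu0]
    · have h1 : U t = u0 := by simp [hU, stepSF_apply, not_lt.mpr ht.1]
      have : 0 ≤ b * t := mul_nonneg hb.le ht.1
      linarith
  · intro U' hU'
    rw [hzero]
    apply integral_nonpos_of_ae
    rw [Filter.EventuallyLE, ae_iff]
    have hres : (U'.measure.restrict (Icc (0:ℝ) T)) {t | ¬ f t ≤ 0} =
        U'.measure ({t | ¬ f t ≤ 0} ∩ Icc (0:ℝ) T) :=
      Measure.restrict_apply' measurableSet_Icc
    have hempty : {t | ¬ f t ≤ 0} ∩ Icc (0:ℝ) T = ∅ := by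
      ext t
      simp only [mem_inter_iff, mem_setOf_eq, mem_Icc, mem_empty_iff_false, iff_false]
      rintro ⟨h1, h2, h3⟩
      exact h1 (hfle t h2)
    simp only [Pi.zero_apply]
    rw [hres, hempty, measure_empty]
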